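/- Let R = k[x_0,...,x_n] and let J be a homogeneous ideal extended from an ideal I of a subring k[ℓ_1,...,ℓ_r] generated by r linearly independent linear forms, where ess(I) = r as an ideal of k[ℓ_1,...,ℓ_r]. Then ess(J) = r. -/
import Mathlib


open MvPolynomial

noncomputable section

variable {k : Type*} [Field k]

/-- The essential codimension of an ideal `J` of `k[x_1,…,x_m]`: the minimal `r`
for which there exist linear forms `ℓ_1,…,ℓ_r` such that `J` is generated by elements of
the subring `k[ℓ_1,…,ℓ_r]`. -/
def essCodim {m : ℕ} (J : Ideal (MvPolynomial (Fin m) k)) : ℕ :=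
  sInf {r : ℕ | ∃ ℓ : Fin r → MvPolynomial (Fin m) k,
    (∀ i, (ℓ i).IsHomogeneous 1) ∧
    ∃ S : Set (MvPolynomial (Fin m) k),
      S ⊆ (Algebra.adjoin k (Set.range ℓ) : Subalgebra k (MvPolynomial (Fin m) k)) ∧
      J = Ideal.span S}

/-- A finitely supported function on `σ` with values in `ℕ` of total degree 1 is
`single j 1` for some `j`. -/
lemma degree_one_eq_single {σ : Type*} {d : σ →₀ ℕ} (hd : Finsupp.degree d = 1) :
    ∃ j, d = Finsupp.single j 1 := by
  classical
  have h0 : d ≠ 0 := by rintro rfl; simp at hd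
  obtain ⟨j, hj⟩ := Finsupp.support_nonempty_iff.mpr h0
  have hsum : d j + ∑ i ∈ d.support.erase j, d i = 1 := by
    rw [Finset.add_sum_erase _ _ hj]; exact hd
  have hdj : d j ≠ 0 := Finsupp.mem_support_iff.mp hj
  have hdj1 : d j = 1 := by omega
  have hrest : ∑ i ∈ d.support.erase j, d i = 0 := by omega
  refine ⟨j, ?_⟩
  ext i
  rcases eq_or_ne i j with rfl | hij
  · simp [hdj1]
  · rw [Finsupp.single_apply, if_neg (Ne.symm hij)]
    by_contra h
    have hi : i ∈ d.support.erase j :=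
      Finset.mem_erase.mpr ⟨hij, Finsupp.mem_support_iff.mpr h⟩
    exact h (Finset.sum_eq_zero_iff.mp hrest i hi)

/-- The homogeneous polynomials of degree 1 are exactly the span of the variables. -/
lemma span_range_X_eq {σ : Type*} :
    Submodule.span k (Set.range (X : σ → MvPolynomial σ k))
      = homogeneousSubmodule σ k 1 := by
  apply le_antisymm
  · rw [Submodule.span_le]
    rintro _ ⟨i, rfl⟩
    exact isHomogeneous_X k i
  · intro p hp
    rw [mem_homogeneousSubmodule] at hp
    rw [p.as_sum]
    refine Submodule.sum_mem _ fun d hd => ?_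
    have hdeg : Finsupp.degree d = 1 := by
      rw [Finsupp.degree_eq_weight_one]
      exact hp (Finsupp.mem_support_iff.mp hd)
    obtain ⟨j, rfl⟩ := degree_one_eq_single hdeg
    rw [← C_mul_X_eq_monomial, ← smul_eq_C_mul]
    exact Submodule.smul_mem _ _ (Submodule.subset_span ⟨j, rfl⟩)

theorem stmt2 {n r : ℕ}
    (ℓ : Fin r → MvPolynomial (Fin (n + 1)) k)
    (hlin : ∀ i, (ℓ i).IsHomogeneous 1)
    (hindep : LinearIndependent k ℓ)
    (I : Ideal (MvPolynomial (Fin r) k))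
    (hIhom : ∃ S : Set (MvPolynomial (Fin r) k),
      (∀ f ∈ S, ∃ e : ℕ, f.IsHomogeneous e) ∧ I = Ideal.span S)
    (hIess : essCodim I = r)
    (J : Ideal (MvPolynomial (Fin (n + 1)) k))
    (hJ : J = I.map (aeval ℓ : MvPolynomial (Fin r) k →ₐ[k] MvPolynomial (Fin (n + 1)) k)) :
    essCodim J = r := by
  classical
  set φ : MvPolynomial (Fin r) k →ₐ[k] MvPolynomial (Fin (n + 1)) k := aeval ℓ with hφ
  -- the retraction π with π ∘ φ = id
  obtain ⟨q, hq⟩ := (Submodule.span k (Set.range ℓ)).exists_isCompl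
  set proj := Submodule.linearProjOfIsCompl _ q hq with hproj
  set L : MvPolynomial (Fin (n + 1)) k →ₗ[k] MvPolynomial (Fin r) k :=
    (Finsupp.linearCombination k (X : Fin r → MvPolynomial (Fin r) k)).comp
      ((hindep.repr : _ →ₗ[k] (Fin r →₀ k)).comp proj) with hL
  set π : MvPolynomial (Fin (n + 1)) k →ₐ[k] MvPolynomial (Fin r) k :=
    aeval (fun j => L (X j)) with hπ
  -- the images of variables under π are homogeneous of degree 1
  have hLmem : ∀ p : MvPolynomial (Fin (n + 1)) k,
      L p ∈ Submodule.span k (Set.range (X : Fin r → MvPolynomial (Fin r) k)) := by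
    intro p
    simp only [hL, LinearMap.comp_apply]
    rw [Finsupp.linearCombination_apply, Finsupp.sum]
    exact Submodule.sum_mem _ fun i _ => Submodule.smul_mem _ _ (Submodule.subset_span ⟨i, rfl⟩)
  have hLhom : ∀ p : MvPolynomial (Fin (n + 1)) k, (L p).IsHomogeneous 1 := by
    intro p
    have := hLmem p
    rw [span_range_X_eq, mem_homogeneousSubmodule] at this
    exact this
  -- π agrees with L on degree-one elements
  have hπL : ∀ p ∈ Submodule.span k (Set.range (X : Fin (n + 1) → MvPolynomial (Fin (n + 1)) k)),
      π p = L p := by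
    intro p hp
    induction hp using Submodule.span_induction with
    | mem x hx => obtain ⟨j, rfl⟩ := hx; simp [hπ]
    | zero => simp
    | add x y _ _ hx hy => rw [map_add, map_add, hx, hy]
    | smul c x _ hx => rw [map_smul, map_smul, hx]
  have hπℓ : ∀ i, π (ℓ i) = X i := by
    intro i
    have hmem : ℓ i ∈ Submodule.span k
        (Set.range (X : Fin (n + 1) → MvPolynomial (Fin (n + 1)) k)) := by
      rw [span_range_X_eq, mem_homogeneousSubmodule]; exact hlin i
    rw [hπL _ hmem]
    have hℓmem : ℓ i ∈ Submodule.span k (Set.range ℓ) := Submodule.subset_span ⟨i, rfl⟩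
    have h1 : proj (ℓ i) = ⟨ℓ i, hℓmem⟩ :=
      Submodule.linearProjOfIsCompl_apply_left hq ⟨ℓ i, hℓmem⟩
    simp only [hL, LinearMap.comp_apply, h1]
    rw [hindep.repr_eq_single i ⟨ℓ i, hℓmem⟩ rfl, Finsupp.linearCombination_single, one_smul]
  have hπφ : π.comp φ = AlgHom.id k (MvPolynomial (Fin r) k) := by
    apply MvPolynomial.algHom_ext
    intro i
    simp [hφ, hπℓ i]
  have hπφ' : ∀ p, π (φ p) = p := fun p => by
    have := congrArg (fun f => AlgHom.toRingHom f p) hπφ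
    simpa using this
  -- the key contraction fact: I = π(J)
  have hIJ : I = J.map (π : MvPolynomial (Fin (n + 1)) k →+* MvPolynomial (Fin r) k) := by
    have h1 : Ideal.map φ I = Ideal.map (φ.toRingHom) I := rfl
    rw [hJ, h1, Ideal.map_map]
    conv_lhs => rw [← Ideal.map_id I]
    congr 1
    exact (RingHom.ext hπφ').symm
  -- membership of r in the defining set for J
  have hmemJ : r ∈ {r' : ℕ | ∃ ℓ' : Fin r' → MvPolynomial (Fin (n + 1)) k,
      (∀ i, (ℓ' i).IsHomogeneous 1) ∧
      ∃ S : Set (MvPolynomial (Fin (n + 1)) k),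
        S ⊆ (Algebra.adjoin k (Set.range ℓ') :
          Subalgebra k (MvPolynomial (Fin (n + 1)) k)) ∧ J = Ideal.span S} := by
    refine ⟨ℓ, hlin, φ '' (I : Set (MvPolynomial (Fin r) k)), ?_, ?_⟩
    · rintro _ ⟨f, hf, rfl⟩
      rw [Algebra.adjoin_range_eq_range_aeval]
      exact ⟨f, rfl⟩
    · rw [hJ]
      rfl
  -- any member of the defining set for J is a member of the defining set for I
  have hsub : ∀ r' ∈ {r' : ℕ | ∃ ℓ' : Fin r' → MvPolynomial (Fin (n + 1)) k,
      (∀ i, (ℓ' i).IsHomogeneous 1) ∧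
      ∃ S : Set (MvPolynomial (Fin (n + 1)) k),
        S ⊆ (Algebra.adjoin k (Set.range ℓ') :
          Subalgebra k (MvPolynomial (Fin (n + 1)) k)) ∧ J = Ideal.span S},
      r ≤ r' := by
    rintro r' ⟨ℓ', hlin', S', hS'sub, hJspan⟩
    have hmemI : r' ∈ {r'' : ℕ | ∃ ℓ'' : Fin r'' → MvPolynomial (Fin r) k,
        (∀ i, (ℓ'' i).IsHomogeneous 1) ∧
        ∃ S : Set (MvPolynomial (Fin r) k),
          S ⊆ (Algebra.adjoin k (Set.range ℓ'') :
            Subalgebra k (MvPolynomial (Fin r) k)) ∧ I = Ideal.span S} := by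
      refine ⟨fun i => π (ℓ' i), ?_, π '' S', ?_, ?_⟩
      · intro i
        have := (hlin' i).aeval (fun j => L (X j)) (fun j => hLhom (X j))
        simpa [hπ] using this
      · rintro _ ⟨s, hs, rfl⟩
        have hmem : s ∈ Algebra.adjoin k (Set.range ℓ') := hS'sub hs
        have : π s ∈ (Algebra.adjoin k (Set.range ℓ')).map π :=
          ⟨s, hmem, rfl⟩
        rw [AlgHom.map_adjoin, ← Set.range_comp] at this
        exact this
      · rw [hIJ, hJspan, Ideal.map_span]
        rfl
    calc r = essCodim I := hIess.symm
      _ ≤ r' := Nat.sInf_le hmemI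
  exact le_antisymm (Nat.sInf_le hmemJ) (le_csInf ⟨r, hmemJ⟩ hsub)
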